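/- arXiv:0912.2151 — 5 statements merged into one kernel-verified Lean document; each statement's English description precedes it below -/
import Mathlib

section
/- Let Δ be a Gorenstein* simplicial complex. If e is a vertex of Δ and σ ∈ Δ is a face not containing e, then there exists a facet of Δ that contains σ and does not contain e. -/
set_option synthInstance.maxHeartbeats 1000000
set_option maxHeartbeats 1000000

open MvPolynomial
/-- An (abstract) simplicial complex on the vertex set `{1, …, m}` (modeled as `Fin m`):
a collection of finite subsets containing all singletons and closed under taking subsets. -/
def IsComplex {m : ℕ} (Δ : Set (Finset (Fin m))) : Prop :=
  (∀ i : Fin m, {i} ∈ Δ) ∧ ∀ ⦃s⦄, s ∈ Δ → ∀ ⦃t : Finset (Fin m)⦄, t ⊆ s → t ∈ Δ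

/-- Facets: faces maximal under inclusion. -/
def IsFacet {m : ℕ} (Δ : Set (Finset (Fin m))) (τ : Finset (Fin m)) : Prop :=
  τ ∈ Δ ∧ ∀ ρ ∈ Δ, τ ⊆ ρ → τ = ρ

/-- A complex is pure if all facets have the same cardinality. -/
def IsPure {m : ℕ} (Δ : Set (Finset (Fin m))) : Prop :=
  ∀ τ ρ, IsFacet Δ τ → IsFacet Δ ρ → τ.card = ρ.card

/-- The link of a face `σ`. -/
def link {m : ℕ} (Δ : Set (Finset (Fin m))) (σ : Finset (Fin m)) :
    Set (Finset (Fin m)) :=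
  {τ | Disjoint τ σ ∧ τ ∪ σ ∈ Δ}

/-- One more than the dimension of `Δ`: the largest cardinality of a face. -/
noncomputable def topCard {m : ℕ} (Δ : Set (Finset (Fin m))) : ℕ :=
  sSup ((fun σ : Finset (Fin m) => σ.card) '' Δ)

/-- The space of simplicial `c`-chains (indexed by cardinality `c`; the empty set is
the unique "(-1)-dimensional" chain generator, giving *reduced* chains). -/
abbrev SChain (k : Type*) [Field k] (m c : ℕ) : Type _ :=
  {σ : Finset (Fin m) // σ.card = c} →₀ k

/-- The simplicial boundary map on chains of cardinality `c`. -/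
noncomputable def sBdry (k : Type*) [Field k] (m c : ℕ) :
    SChain k m c →ₗ[k] SChain k m (c - 1) :=
  Finsupp.lsum k fun σ => LinearMap.toSpanSingleton k _
    (∑ j ∈ σ.1.attach, ((-1 : k) ^ ((σ.1.filter (fun a => a < j.1)).card)) •
      Finsupp.single ⟨σ.1.erase j.1, by rw [Finset.card_erase_of_mem j.2, σ.2]⟩ 1)

/-- Chains supported on faces of `Δ`. -/
noncomputable def faceSpan (k : Type*) [Field k] {m : ℕ} (Δ : Set (Finset (Fin m)))
    (c : ℕ) : Submodule k (SChain k m c) :=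
  Submodule.span k
    {x | ∃ σ : {σ : Finset (Fin m) // σ.card = c}, σ.1 ∈ Δ ∧ x = Finsupp.single σ 1}

/-- Reduced simplicial homology of `Δ` (with coefficients in `k`) in chain-cardinality `c`,
i.e. `H̃_{c-1}(Δ; k)`. -/
noncomputable abbrev sCycles (k : Type*) [Field k] {m : ℕ} (Δ : Set (Finset (Fin m)))
    (c : ℕ) : Submodule k (SChain k m c) :=
  LinearMap.ker (sBdry k m c) ⊓ faceSpan k Δ c

noncomputable def redHomology (k : Type*) [Field k] {m : ℕ} (Δ : Set (Finset (Fin m)))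
    (c : ℕ) : Type _ :=
  letI : HasQuotient (sCycles k Δ c) (Submodule k (sCycles k Δ c)) := by exact @Submodule.hasQuotient k (sCycles k Δ c) _ _ _
  (sCycles k Δ c) ⧸
    (Submodule.comap (sCycles k Δ c).subtype
      (Submodule.map (sBdry k m (c + 1)) (faceSpan k Δ (c + 1))))

noncomputable instance (k : Type*) [Field k] {m : ℕ} (Δ : Set (Finset (Fin m))) (c : ℕ) :
    AddCommGroup (redHomology k Δ c) := by unfold redHomology; infer_instance

noncomputable instance (k : Type*) [Field k] {m : ℕ} (Δ : Set (Finset (Fin m))) (c : ℕ) :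
    Module k (redHomology k Δ c) := by unfold redHomology; infer_instance

/-- `Δ` is Gorenstein* over `k`: for every face `σ` the link of `σ` has the reduced homology
of a sphere of dimension `dim lk(σ)`.  (Chain-cardinality `c` corresponds to dimension
`c - 1`, and `topCard` is `dim + 1`.) -/
def IsGorensteinStar (k : Type*) [Field k] {m : ℕ} (Δ : Set (Finset (Fin m))) : Prop :=
  ∀ σ ∈ Δ, ∀ c : ℕ,
    Module.rank k (redHomology k (link Δ σ) c) =
      if c = topCard (link Δ σ) then 1 else 0


/-- Every face of a complex on `Fin m` is contained in a facet. -/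
lemma my_exists_facet {m : ℕ} (Δ : Set (Finset (Fin m))) (σ : Finset (Fin m))
    (hσ : σ ∈ Δ) : ∃ τ, IsFacet Δ τ ∧ σ ⊆ τ := by
  set T : Set ℕ := {n | ∃ ρ ∈ Δ, σ ⊆ ρ ∧ ρ.card = n} with hT
  have hne : T.Nonempty := ⟨σ.card, σ, hσ, subset_rfl, rfl⟩
  have hbdd : BddAbove T := by
    refine ⟨m, ?_⟩
    rintro n ⟨ρ, -, -, rfl⟩
    simpa using Finset.card_le_univ ρ
  obtain ⟨ρ, hρΔ, hσρ, hcard⟩ := Nat.sSup_mem hne hbdd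
  refine ⟨ρ, ⟨hρΔ, ?_⟩, hσρ⟩
  intro ρ' hρ' hsub
  have hle : ρ'.card ≤ sSup T := le_csSup hbdd ⟨ρ', hρ', hσρ.trans hsub, rfl⟩
  exact Finset.eq_of_subset_of_card_le hsub (hcard ▸ hle)

/-- `faceSpan` is the set of finsupps supported on faces. -/
lemma my_faceSpan_eq (k : Type*) [Field k] {m : ℕ} (Δ : Set (Finset (Fin m))) (c : ℕ) :
    faceSpan k Δ c = Finsupp.supported k k {σ : {σ : Finset (Fin m) // σ.card = c} | σ.1 ∈ Δ} := by
  rw [Finsupp.supported_eq_span_single, faceSpan]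
  congr 1
  ext x
  simp only [Set.mem_setOf_eq, Set.mem_image]
  constructor
  · rintro ⟨σ, h1, rfl⟩; exact ⟨σ, h1, rfl⟩
  · rintro ⟨σ, h1, rfl⟩; exact ⟨σ, h1, rfl⟩

/-- in a Gorenstein* complex, for a vertex `e` and a face `σ` not containing
`e` there is a facet containing `σ` and not containing `e`. -/
theorem exists_facet_containing_avoiding (k : Type*) [Field k] {m : ℕ}
    (Δ : Set (Finset (Fin m))) (hΔ : IsComplex Δ) (hG : IsGorensteinStar k Δ)
    (e : Fin m) (he : ({e} : Finset (Fin m)) ∈ Δ)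
    (σ : Finset (Fin m)) (hσ : σ ∈ Δ) (heσ : e ∉ σ) :
    ∃ τ : Finset (Fin m), IsFacet Δ τ ∧ σ ⊆ τ ∧ e ∉ τ := by
  by_contra hcon
  push_neg at hcon
  -- every facet containing σ contains e
  have hfac : ∀ τ, IsFacet Δ τ → σ ⊆ τ → e ∈ τ := by
    intro τ h1 h2
    by_contra he'
    exact he' (hcon τ h1 h2)
  set L : Set (Finset (Fin m)) := link Δ σ with hL
  set c : ℕ := topCard L with hc
  -- the link is a cone with apex e
  have cone : ∀ τ ∈ L, insert e τ ∈ L := by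
    rintro τ ⟨hd, hτσ⟩
    obtain ⟨F, hF, hsubF⟩ := my_exists_facet Δ (τ ∪ σ) hτσ
    have hσF : σ ⊆ F := (Finset.subset_union_right).trans hsubF
    have heF : e ∈ F := hfac F hF hσF
    constructor
    · rw [Finset.disjoint_insert_left]
      exact ⟨heσ, hd⟩
    · refine hΔ.2 hF.1 ?_
      intro x hx
      rcases Finset.mem_union.1 hx with hx | hx
      · rcases Finset.mem_insert.1 hx with rfl | hx
        · exact heF
        · exact hsubF (Finset.mem_union_left _ hx)
      · exact hσF hx
  have hbddL : BddAbove ((fun σ : Finset (Fin m) => σ.card) '' L) := by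
    refine ⟨m, ?_⟩
    rintro n ⟨ρ, -, rfl⟩
    simpa using Finset.card_le_univ ρ
  have hboundL : ∀ τ ∈ L, τ.card ≤ c := fun τ hτ => le_csSup hbddL ⟨τ, hτ, rfl⟩
  have hemptyL : (∅ : Finset (Fin m)) ∈ L := ⟨Finset.disjoint_empty_left σ, by simpa using hσ⟩
  have heL : ({e} : Finset (Fin m)) ∈ L := by simpa using cone ∅ hemptyL
  have hc1 : 1 ≤ c := by simpa using hboundL {e} heL
  -- every face of the link of cardinality c contains e
  have htop : ∀ τ ∈ L, τ.card = c → e ∈ τ := by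
    intro τ hτ hcard
    by_contra he'
    have := hboundL _ (cone τ hτ)
    rw [Finset.card_insert_of_notMem he', hcard] at this
    omega
  -- top-degree cycles vanish
  have scyc : sCycles k L c = ⊥ := by
    rw [eq_bot_iff]
    rintro z ⟨hker, hspan⟩
    rw [Submodule.mem_bot]
    by_contra hz0
    obtain ⟨τ₀, hτ₀⟩ := Finsupp.support_nonempty_iff.2 hz0
    rw [my_faceSpan_eq] at hspan
    have hsupp : ∀ τ ∈ z.support, τ.1 ∈ L := fun τ hτ =>
      (Finsupp.mem_supported k z).1 hspan hτ
    have heτ₀ : e ∈ τ₀.1 := htop _ (hsupp _ hτ₀) τ₀.2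
    set ρ : {σ : Finset (Fin m) // σ.card = c - 1} :=
      ⟨τ₀.1.erase e, by rw [Finset.card_erase_of_mem heτ₀, τ₀.2]⟩ with hρ
    have hz : (sBdry k m c z) ρ = 0 := by
      rw [LinearMap.mem_ker.1 hker]; rfl
    rw [sBdry, Finsupp.lsum_apply] at hz
    rw [Finsupp.sum_apply, Finsupp.sum] at hz
    rw [Finset.sum_eq_single τ₀] at hz
    · rw [LinearMap.toSpanSingleton_apply, Finsupp.smul_apply, Finset.sum_apply'] at hz
      rw [Finset.sum_eq_single (⟨e, heτ₀⟩ : {x // x ∈ τ₀.1})] at hz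
      · simp only [Finsupp.smul_apply, Finsupp.single_apply, smul_eq_mul, if_true,
          mul_one] at hz
        have : z τ₀ ≠ 0 := Finsupp.mem_support_iff.1 hτ₀
        rcases mul_eq_zero.1 hz with h | h
        · exact this h
        · simp [hρ] at h
      · rintro ⟨j, hj⟩ - hne
        simp only [Finsupp.smul_apply, Finsupp.single_apply, smul_eq_mul]
        rw [if_neg, mul_zero]
        intro hcontra
        apply hne
        have hj_eq : τ₀.1.erase j = τ₀.1.erase e := congrArg Subtype.val hcontra
        have : j = e := by
          by_contra hje
          have : e ∈ τ₀.1.erase j := Finset.mem_erase.2 ⟨Ne.symm hje, heτ₀⟩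
          rw [hj_eq] at this
          exact (Finset.mem_erase.1 this).1 rfl
        exact Subtype.ext this
      · intro h
        exact absurd (Finset.mem_attach _ _) h
    · intro τ hτ hne
      rw [LinearMap.toSpanSingleton_apply, Finsupp.smul_apply, Finset.sum_apply']
      have heτ : e ∈ τ.1 := htop _ (hsupp _ hτ) τ.2
      rw [Finset.sum_eq_zero, smul_zero]
      rintro ⟨j, hj⟩ -
      simp only [Finsupp.smul_apply, Finsupp.single_apply, smul_eq_mul]
      rw [if_neg, mul_zero]
      intro hcontra
      apply hne
      have hj_eq : τ.1.erase j = τ₀.1.erase e := congrArg Subtype.val hcontra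
      have hje : j = e := by
        by_contra hje
        have : e ∈ τ.1.erase j := Finset.mem_erase.2 ⟨Ne.symm hje, heτ⟩
        rw [hj_eq] at this
        exact (Finset.mem_erase.1 this).1 rfl
      subst hje
      apply Subtype.ext
      have h1 : insert j (τ.1.erase j) = insert j (τ₀.1.erase j) := by rw [hj_eq]
      rwa [Finset.insert_erase hj, Finset.insert_erase heτ₀] at h1
    · intro h
      exact absurd hτ₀ h
  -- hence homology vanishes in top degree, contradicting Gorenstein*
  haveI hsub : Subsingleton (sCycles k L c) := by
    rw [scyc]; infer_instance
  haveI : Subsingleton (redHomology k L c) := by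
    unfold redHomology
    exact Quotient.instSubsingletonQuotient _
  have h0 : Module.rank k (redHomology k L c) = 0 := rank_subsingleton' k _
  have h1 : Module.rank k (redHomology k L c) = 1 := by
    have := hG σ hσ c
    rwa [if_pos rfl] at this
  rw [h0] at h1
  exact zero_ne_one h1
end

section
/- Let Δ = {∅,{1},{2},{3},{1,2},{1,3}} and σ = {1,2}. Then in k[Δ] = k[x₁,x₂,x₃]/(x₂x₃) one has J_σ = (0 : x₁x₂) = (x₃) and (0 : J_σ) = (x₂) ≠ (x₁x₂). In particular, the conclusion (0 : J_σ) = (x_σ) fails when k[Δ] is merely Gorenstein (and Δ is acyclic). -/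
set_option synthInstance.maxHeartbeats 1000000
set_option maxHeartbeats 1000000

open MvPolynomial
/-- The square-free monomial with support `ρ`. -/
noncomputable def xmon (k : Type*) [Field k] {m : ℕ} (ρ : Finset (Fin m)) :
    MvPolynomial (Fin m) k := ∏ i ∈ ρ, X i

/-- The Stanley–Reisner ideal of `Δ`: generated by the square-free monomials of non-faces. -/
noncomputable def srIdeal (k : Type*) [Field k] {m : ℕ} (Δ : Set (Finset (Fin m))) :
    Ideal (MvPolynomial (Fin m) k) :=
  Ideal.span ((fun ρ => xmon k ρ) '' {ρ : Finset (Fin m) | ρ ∉ Δ})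

/-- The Stanley–Reisner ring `k[Δ]`. -/
abbrev SR (k : Type*) [Field k] {m : ℕ} (Δ : Set (Finset (Fin m))) :=
  MvPolynomial (Fin m) k ⧸ srIdeal k Δ

/-- The class of the monomial `x_σ` in `k[Δ]`. -/
noncomputable def xcls (k : Type*) [Field k] {m : ℕ} (Δ : Set (Finset (Fin m)))
    (σ : Finset (Fin m)) : SR k Δ :=
  Ideal.Quotient.mk (srIdeal k Δ) (xmon k σ)

/-- `J_σ = (0 : x_σ)`, the annihilator of `x_σ` in `k[Δ]`. -/
noncomputable def Jσ (k : Type*) [Field k] {m : ℕ} (Δ : Set (Finset (Fin m)))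
    (σ : Finset (Fin m)) : Ideal (SR k Δ) :=
  (⊥ : Ideal (SR k Δ)).colon (Ideal.span {xcls k Δ σ})


/-- The complex `Δ = {∅,{1},{2},{3},{1,2},{1,3}}` (vertices `1,2,3` modeled as `0,1,2`). -/
def Δex : Set (Finset (Fin 3)) := {∅, {0}, {1}, {2}, {0, 1}, {0, 2}}

section Aux
variable {k : Type*} [Field k]

private lemma primeX (i : Fin 3) : Prime (X i : MvPolynomial (Fin 3) k) := by
  have h0 : Prime (X 0 : MvPolynomial (Fin 3) k) := by
    rw [← MulEquiv.prime_iff (finSuccEquiv k 2).toMulEquiv]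
    simpa [finSuccEquiv_X_zero] using (Polynomial.prime_X :
      Prime (Polynomial.X : Polynomial (MvPolynomial (Fin 2) k)))
  rw [← MulEquiv.prime_iff (renameEquiv k (Equiv.swap 0 i)).toMulEquiv] at h0
  simpa [renameEquiv_apply, rename_X, Equiv.swap_apply_left] using h0

private lemma dvdA (f : MvPolynomial (Fin 3) k) :
    X 1 * X 2 ∣ f * (X 0 * X 1) ↔ X 2 ∣ f := by
  constructor
  · intro h
    have h' : (X 2 : MvPolynomial (Fin 3) k) * X 1 ∣ (f * X 0) * X 1 := by
      rw [mul_comm (X 2)]; convert h using 1; ring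
    rw [mul_dvd_mul_iff_right (X_ne_zero 1)] at h'
    rcases (primeX 2).2.2 f (X 0) h' with h2 | h2
    · exact h2
    · rw [X_dvd_X] at h2; exact absurd h2 (by decide)
  · rintro ⟨c, rfl⟩
    exact ⟨c * X 0, by ring⟩

private lemma dvdB (f : MvPolynomial (Fin 3) k) :
    X 1 * X 2 ∣ f * X 2 ↔ X 1 ∣ f := by
  constructor
  · intro h
    have h' : (X 1 : MvPolynomial (Fin 3) k) * X 2 ∣ f * X 2 := h
    rw [mul_dvd_mul_iff_right (X_ne_zero 2)] at h'
    exact h'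
  · rintro ⟨c, rfl⟩
    exact ⟨c, by ring⟩

private lemma nonface (ρ : Finset (Fin 3)) (h : ρ ∉ Δex) : ({1, 2} : Finset (Fin 3)) ⊆ ρ := by
  have key : ∀ ρ : Finset (Fin 3),
      ¬(ρ = ∅ ∨ ρ = {0} ∨ ρ = {1} ∨ ρ = {2} ∨ ρ = {0, 1} ∨ ρ = {0, 2}) →
      ({1, 2} : Finset (Fin 3)) ⊆ ρ := by decide
  apply key
  intro hor
  apply h
  simp only [Δex, Set.mem_insert_iff, Set.mem_singleton_iff]
  tauto

private lemma xmon12 : xmon k ({1, 2} : Finset (Fin 3)) = X 1 * X 2 := by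
  simp [xmon, Finset.prod_pair (by decide : (1 : Fin 3) ≠ 2)]

private lemma xmon01 : xmon k ({0, 1} : Finset (Fin 3)) = X 0 * X 1 := by
  simp [xmon, Finset.prod_pair (by decide : (0 : Fin 3) ≠ 1)]

private lemma part1 : srIdeal k Δex = Ideal.span {X 1 * X 2} := by
  apply le_antisymm
  · rw [srIdeal, Ideal.span_le]
    rintro _ ⟨ρ, hρ, rfl⟩
    rw [SetLike.mem_coe, Ideal.mem_span_singleton]
    have h := Finset.prod_dvd_prod_of_subset ({1, 2} : Finset (Fin 3)) ρ
      (fun i => (X i : MvPolynomial (Fin 3) k)) (nonface ρ hρ)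
    rw [← xmon12]
    exact h
  · rw [Ideal.span_le, Set.singleton_subset_iff, SetLike.mem_coe, ← xmon12]
    exact Ideal.subset_span ⟨{1, 2}, by simp [Δex]; decide, rfl⟩

end Aux

/-- for `Δ = {∅,{1},{2},{3},{1,2},{1,3}}` and `σ = {1,2}` one has
`k[Δ] = k[x₁,x₂,x₃]/(x₂x₃)`, `J_σ = (0 : x₁x₂) = (x₃)`, and `(0 : J_σ) = (x₂) ≠ (x_σ)`;
so the conclusion `(0 : J_σ) = (x_σ)` fails for this merely Gorenstein (acyclic) complex. -/
theorem counterexample_gorenstein_not_star (k : Type*) [Field k] :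
    srIdeal k Δex = Ideal.span {X 1 * X 2} ∧
    Jσ k Δex {0, 1} = Ideal.span {Ideal.Quotient.mk (srIdeal k Δex) (X 2)} ∧
    (⊥ : Ideal (SR k Δex)).colon (Jσ k Δex {0, 1}) =
      Ideal.span {Ideal.Quotient.mk (srIdeal k Δex) (X 1)} ∧
    Ideal.span {Ideal.Quotient.mk (srIdeal k Δex) (X 1)} ≠
      Ideal.span {xcls k Δex {0, 1}} := by
  have hsr : srIdeal k Δex = Ideal.span {X 1 * X 2} := part1
  set I := srIdeal k Δex with hI
  have hzero : ∀ f : MvPolynomial (Fin 3) k,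
      Ideal.Quotient.mk I f = 0 ↔ X 1 * X 2 ∣ f := fun f => by
    rw [Ideal.Quotient.eq_zero_iff_mem, hsr, Ideal.mem_span_singleton]
  have hspan : ∀ g f : MvPolynomial (Fin 3) k, (X 1 * X 2) ∈ Ideal.span {g} →
      (Ideal.Quotient.mk I f ∈ Ideal.span {Ideal.Quotient.mk I g} ↔ g ∣ f) := by
    intro g f hg
    rw [← Set.image_singleton, ← Ideal.map_span, Ideal.mem_quotient_iff_mem_sup, hsr,
      sup_eq_left.mpr (Ideal.span_le.mpr (by simpa using hg)), Ideal.mem_span_singleton]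
  have hX2span : (X 1 * X 2 : MvPolynomial (Fin 3) k) ∈ Ideal.span {X 2} :=
    Ideal.mem_span_singleton.mpr ⟨X 1, mul_comm _ _⟩
  have hX1span : (X 1 * X 2 : MvPolynomial (Fin 3) k) ∈ Ideal.span {X 1} :=
    Ideal.mem_span_singleton.mpr ⟨X 2, rfl⟩
  have hxcls : xcls k Δex {0, 1} = Ideal.Quotient.mk I (X 0 * X 1) := by
    rw [xcls, xmon01]
  have part2 : Jσ k Δex {0, 1} =
      Ideal.span {Ideal.Quotient.mk I (X 2)} := by
    ext a
    obtain ⟨f, rfl⟩ := Ideal.Quotient.mk_surjective a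
    rw [Jσ, hxcls, Ideal.mem_colon_span_singleton, Ideal.mem_bot, ← map_mul, hzero, dvdA,
      hspan (X 2) f hX2span]
  refine ⟨hsr, part2, ?_, ?_⟩
  · ext a
    obtain ⟨f, rfl⟩ := Ideal.Quotient.mk_surjective a
    rw [part2, Ideal.mem_colon_span_singleton, Ideal.mem_bot, ← map_mul, hzero, dvdB,
      hspan (X 1) f hX1span]
  · intro heq
    have h1 : Ideal.Quotient.mk I (X 1) ∈ Ideal.span {xcls k Δex {0, 1}} := by
      rw [← heq]; exact Ideal.subset_span rfl
    rw [hxcls, ← Set.image_singleton, ← Ideal.map_span, Ideal.mem_quotient_iff_mem_sup,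
      hsr] at h1
    obtain ⟨y, hy, z, hz, hyz⟩ := Submodule.mem_sup.mp h1
    obtain ⟨a, rfl⟩ := Ideal.mem_span_singleton.mp hy
    obtain ⟨b, rfl⟩ := Ideal.mem_span_singleton.mp hz
    have := congrArg (eval (fun t : Fin 3 => if t = 1 then (1 : k) else 0)) hyz
    simp [eval_X, (by decide : (0 : Fin 3) ≠ 1), (by decide : (2 : Fin 3) ≠ 1)] at this
end

section
/- Let Δ be a simplicial complex on {1,...,m} and σ ∈ Δ a face of dimension ≥ 1. Let Δ_σ be the stellar subdivision of Δ on σ, a complex on {1,...,m+1}. Then k[Δ_σ] ≅ k[x₁,...,x_{m+1}]/(I_Δ, x_σ, x_{m+1}u₁, ..., x_{m+1}u_r), where {u₁,...,u_r} is a set of monomials in k[x₁,...,x_m] whose images generate the ideal J_σ = (0 : x_σ) of k[Δ]. -/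
set_option synthInstance.maxHeartbeats 1000000
set_option maxHeartbeats 1000000

open MvPolynomial
/-- The stellar subdivision of `Δ` on `σ`, a complex on `{1, …, m+1}` with new vertex
`m+1` (modeled as `Fin.last m`). -/
def stellar {m : ℕ} (Δ : Set (Finset (Fin m))) (σ : Finset (Fin m)) :
    Set (Finset (Fin (m + 1))) :=
  ((fun τ : Finset (Fin m) => τ.image Fin.castSucc) '' {τ ∈ Δ | ¬ σ ⊆ τ}) ∪
  ((fun τ : Finset (Fin m) => insert (Fin.last m) (τ.image Fin.castSucc)) ''
    {τ | τ ∈ Δ ∧ ¬ σ ⊆ τ ∧ τ ∪ σ ∈ Δ})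

namespace StellarAux

noncomputable def ind {n : ℕ} (ρ : Finset (Fin n)) : Fin n →₀ ℕ := ∑ i ∈ ρ, Finsupp.single i 1

lemma ind_apply {n : ℕ} (ρ : Finset (Fin n)) (j : Fin n) :
    ind ρ j = if j ∈ ρ then 1 else 0 := by
  classical
  simp [ind, Finsupp.finset_sum_apply, Finsupp.single_apply]

lemma ind_support {n : ℕ} (ρ : Finset (Fin n)) : (ind ρ).support = ρ := by
  ext j; simp [Finsupp.mem_support_iff, ind_apply]

lemma ind_le_iff {n : ℕ} (ρ : Finset (Fin n)) (a : Fin n →₀ ℕ) :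
    ind ρ ≤ a ↔ ρ ⊆ a.support := by
  rw [Finsupp.le_def]
  simp only [ind_apply, Finset.subset_iff, Finsupp.mem_support_iff]
  constructor
  · intro h i hi
    have := h i; rw [if_pos hi] at this; omega
  · intro h i
    by_cases hi : i ∈ ρ
    · rw [if_pos hi]; have := h hi; omega
    · rw [if_neg hi]; omega

lemma xmon_eq {k : Type*} [Field k] {n : ℕ} (ρ : Finset (Fin n)) :
    xmon k ρ = monomial (ind ρ) 1 := by
  classical
  induction ρ using Finset.induction with
  | empty => simp [xmon, ind]
  | insert _ _ h ih =>
    rw [xmon, Finset.prod_insert h, ← xmon, ih,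
      show ind (insert _ _) = Finsupp.single _ 1 + ind _ from Finset.sum_insert h,
      monomial_single_add, pow_one]

lemma support_add_nat {α : Type*} [DecidableEq α] (f g : α →₀ ℕ) :
    (f + g).support = f.support ∪ g.support := by
  ext i; simp [Finsupp.mem_support_iff]; omega

lemma srIdeal_eq (k : Type*) [Field k] {n : ℕ} (Δ : Set (Finset (Fin n))) :
    srIdeal k Δ = Ideal.span
      ((fun s => monomial s (1 : k)) '' (ind '' {ρ : Finset (Fin n) | ρ ∉ Δ})) := by
  rw [srIdeal, Set.image_image]
  congr 1
  exact Set.image_congr fun ρ _ => xmon_eq ρ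

lemma monomial_mem_srIdeal {k : Type*} [Field k] {n : ℕ} {Δ : Set (Finset (Fin n))}
    {a : Fin n →₀ ℕ} (h : a.support ∉ Δ) : (monomial a (1 : k)) ∈ srIdeal k Δ := by
  classical
  rw [srIdeal_eq, mem_ideal_span_monomial_image]
  intro xi hxi
  rw [support_monomial, if_neg one_ne_zero, Finset.mem_singleton] at hxi
  subst hxi
  exact ⟨ind xi.support, ⟨xi.support, h, rfl⟩, (ind_le_iff _ _).2 le_rfl⟩

lemma support_not_mem_of_monomial_mem {k : Type*} [Field k] {n : ℕ} {Δ : Set (Finset (Fin n))}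
    (hΔ : IsComplex Δ) {a : Fin n →₀ ℕ} (h : (monomial a (1 : k)) ∈ srIdeal k Δ) :
    a.support ∉ Δ := by
  classical
  rw [srIdeal_eq, mem_ideal_span_monomial_image] at h
  obtain ⟨si, ⟨ρ, hρ, rfl⟩, hle⟩ := h a (by
    rw [support_monomial, if_neg one_ne_zero]; exact Finset.mem_singleton_self a)
  intro hsup
  exact hρ (hΔ.2 hsup ((ind_le_iff _ _).1 hle))

lemma mul_X_rename_mem_span_image {k : Type*} [Field k] {m : ℕ}
    (U : Set (MvPolynomial (Fin m) k))
    {p : MvPolynomial (Fin m) k} (hp : p ∈ Ideal.span U) :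
    X (Fin.last m) * rename (Fin.castSucc : Fin m → Fin (m+1)) p ∈
      Ideal.span ((fun u => X (Fin.last m) *
        rename (Fin.castSucc : Fin m → Fin (m+1)) u) '' U) := by
  induction hp using Submodule.span_induction with
  | mem x hx => exact Ideal.subset_span ⟨x, hx, rfl⟩
  | zero => simp
  | add x y hx hy ihx ihy => rw [map_add, mul_add]; exact Ideal.add_mem _ ihx ihy
  | smul r x hx ih =>
    rw [smul_eq_mul, map_mul, mul_left_comm]
    exact Ideal.mul_mem_left _ _ ih

lemma last_not_mem_image {m : ℕ} (τ : Finset (Fin m)) :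
    Fin.last m ∉ τ.image Fin.castSucc := by
  simp only [Finset.mem_image, not_exists]
  rintro i ⟨_, hi⟩
  exact (Fin.castSucc_lt_last i).ne hi

lemma image_castSucc_inj {m : ℕ} {τ τ' : Finset (Fin m)}
    (h : τ.image Fin.castSucc = τ'.image Fin.castSucc) : τ = τ' :=
  Finset.image_injective (Fin.castSucc_injective m) h

lemma mem_stellar_image {m : ℕ} {Δ : Set (Finset (Fin m))} {σ τ : Finset (Fin m)} :
    τ.image Fin.castSucc ∈ stellar Δ σ ↔ τ ∈ Δ ∧ ¬ σ ⊆ τ := by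
  constructor
  · rintro (⟨τ', ⟨h1, h2⟩, heq⟩ | ⟨τ', ⟨h1, h2, h3⟩, heq⟩)
    · cases image_castSucc_inj heq; exact ⟨h1, h2⟩
    · exfalso
      have := last_not_mem_image τ
      rw [← heq] at this
      exact this (Finset.mem_insert_self _ _)
  · intro h
    exact Or.inl ⟨τ, ⟨h.1, h.2⟩, rfl⟩

lemma mem_stellar_insert {m : ℕ} {Δ : Set (Finset (Fin m))} {σ τ : Finset (Fin m)} :
    insert (Fin.last m) (τ.image Fin.castSucc) ∈ stellar Δ σ ↔
      τ ∈ Δ ∧ ¬ σ ⊆ τ ∧ τ ∪ σ ∈ Δ := by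
  constructor
  · rintro (⟨τ', _, heq⟩ | ⟨τ', ⟨h1, h2, h3⟩, heq⟩)
    · exfalso
      apply last_not_mem_image τ'
      show Fin.last m ∈ Finset.image Fin.castSucc τ'
      have heq' : Finset.image Fin.castSucc τ' =
          insert (Fin.last m) (Finset.image Fin.castSucc τ) := heq
      rw [heq']
      exact Finset.mem_insert_self _ _
    · have : τ' = τ := by
        apply image_castSucc_inj
        have := congrArg (fun s => Finset.erase s (Fin.last m)) heq
        simpa [Finset.erase_insert (last_not_mem_image τ'),
          Finset.erase_insert (last_not_mem_image τ)] using this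
      subst this
      exact ⟨h1, h2, h3⟩
  · intro h
    exact Or.inr ⟨τ, ⟨h.1, h.2.1, h.2.2⟩, rfl⟩

lemma rename_xmon {k : Type*} [Field k] {m : ℕ} (ρ : Finset (Fin m)) :
    rename (Fin.castSucc : Fin m → Fin (m + 1)) (xmon k ρ)
      = xmon k (ρ.image Fin.castSucc) := by
  rw [xmon, map_prod, xmon, Finset.prod_image]
  · simp
  · exact fun a _ b _ h => Fin.castSucc_injective m h

lemma xmon_sdiff {k : Type*} [Field k] {m : ℕ} {σ τ : Finset (Fin m)} (h : σ ⊆ τ) :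
    xmon k τ = xmon k (τ \ σ) * xmon k σ := by
  rw [xmon, xmon, xmon]
  exact (Finset.prod_sdiff h).symm

end StellarAux

open StellarAux

set_option maxHeartbeats 8000000
/-- presentation of the Stanley–Reisner ring of a stellar subdivision:
`k[Δ_σ] ≅ k[x₁,…,x_{m+1}]/(I_Δ, x_σ, x_{m+1}u₁, …, x_{m+1}u_r)` where the monomials
`u₁,…,u_r` generate `J_σ = (0 : x_σ)` in `k[Δ]`. -/

theorem sr_stellar_presentation (k : Type*) [Field k] {m : ℕ} (Δ : Set (Finset (Fin m)))
    (hΔ : IsComplex Δ) (σ : Finset (Fin m)) (hσ : σ ∈ Δ) (hcard : 2 ≤ σ.card)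
    (U : Set (MvPolynomial (Fin m) k))
    (hUmon : ∀ p ∈ U, ∃ s : Fin m →₀ ℕ, p = MvPolynomial.monomial s 1)
    (hU : Ideal.span (Ideal.Quotient.mk (srIdeal k Δ) '' U) = Jσ k Δ σ) :
    Nonempty (SR k (stellar Δ σ) ≃ₐ[k]
      (MvPolynomial (Fin (m + 1)) k ⧸
        ((srIdeal k Δ).map (MvPolynomial.rename (Fin.castSucc : Fin m → Fin (m+1))).toRingHom ⊔
         Ideal.span {MvPolynomial.rename (Fin.castSucc : Fin m → Fin (m+1)) (xmon k σ)} ⊔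
         Ideal.span ((fun u => X (Fin.last m) *
            MvPolynomial.rename (Fin.castSucc : Fin m → Fin (m+1)) u) '' U)))) := by
  classical
  refine ⟨Ideal.quotientEquivAlgOfEq k ?_⟩
  have hAle : (srIdeal k Δ).map
      (rename (Fin.castSucc : Fin m → Fin (m+1))).toRingHom ≤
      (srIdeal k Δ).map (rename (Fin.castSucc : Fin m → Fin (m+1))).toRingHom ⊔
      Ideal.span {rename (Fin.castSucc : Fin m → Fin (m+1)) (xmon k σ)} ⊔
      Ideal.span ((fun u => X (Fin.last m) *
        rename (Fin.castSucc : Fin m → Fin (m+1)) u) '' U) := le_sup_left.trans le_sup_left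
  have hBle : Ideal.span {rename (Fin.castSucc : Fin m → Fin (m+1)) (xmon k σ)} ≤
      (srIdeal k Δ).map (rename (Fin.castSucc : Fin m → Fin (m+1))).toRingHom ⊔
      Ideal.span {rename (Fin.castSucc : Fin m → Fin (m+1)) (xmon k σ)} ⊔
      Ideal.span ((fun u => X (Fin.last m) *
        rename (Fin.castSucc : Fin m → Fin (m+1)) u) '' U) := le_sup_right.trans le_sup_left
  have hCle : Ideal.span ((fun u => X (Fin.last m) *
      rename (Fin.castSucc : Fin m → Fin (m+1)) u) '' U) ≤
      (srIdeal k Δ).map (rename (Fin.castSucc : Fin m → Fin (m+1))).toRingHom ⊔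
      Ideal.span {rename (Fin.castSucc : Fin m → Fin (m+1)) (xmon k σ)} ⊔
      Ideal.span ((fun u => X (Fin.last m) *
        rename (Fin.castSucc : Fin m → Fin (m+1)) u) '' U) := le_sup_right
  have hrn : ∀ q : MvPolynomial (Fin m) k,
      (rename (Fin.castSucc : Fin m → Fin (m+1))).toRingHom q
        = rename (Fin.castSucc : Fin m → Fin (m+1)) q := fun _ => rfl
  apply le_antisymm
  · -- srIdeal (stellar) ≤ big ideal
    rw [srIdeal, Ideal.span_le]
    rintro _ ⟨ρ', hρ', rfl⟩
    simp only [Set.mem_setOf_eq] at hρ'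
    rw [SetLike.mem_coe]
    show xmon k ρ' ∈ _
    by_cases hL : Fin.last m ∈ ρ'
    · -- case last ∈ ρ'
      set τ := (ρ'.erase (Fin.last m)).preimage Fin.castSucc
        (Fin.castSucc_injective m).injOn with hτdef
      have himg : τ.image Fin.castSucc = ρ'.erase (Fin.last m) := by
        rw [hτdef, Finset.image_preimage]
        apply Finset.filter_true_of_mem
        intro x hx
        obtain ⟨y, hy⟩ := Fin.eq_castSucc_of_ne_last (Finset.mem_erase.1 hx).1
        exact ⟨y, hy⟩
      have hins : insert (Fin.last m) (τ.image Fin.castSucc) = ρ' := by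
        rw [himg, Finset.insert_erase hL]
      have hxρ : xmon k ρ' = X (Fin.last m) *
          rename (Fin.castSucc : Fin m → Fin (m+1)) (xmon k τ) := by
        rw [← hins, rename_xmon, xmon, Finset.prod_insert (last_not_mem_image τ), ← xmon]
      by_cases hστ : σ ⊆ τ
      · rw [hxρ, xmon_sdiff hστ, map_mul]
        refine hBle (Ideal.mem_span_singleton'.2
          ⟨X (Fin.last m) * rename (Fin.castSucc : Fin m → Fin (m+1)) (xmon k (τ \ σ)), by ring⟩)
      · by_cases hτσ : τ ∪ σ ∈ Δ
        · exact absurd (hins ▸ mem_stellar_insert.2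
            ⟨hΔ.2 hτσ Finset.subset_union_left, hστ, hτσ⟩) hρ'
        · -- hard case : τ ∪ σ ∉ Δ
          have h1 : xmon k τ * xmon k σ ∈ srIdeal k Δ := by
            have he : xmon k (τ ∪ σ) * xmon k (τ ∩ σ) = xmon k τ * xmon k σ := by
              rw [xmon, xmon, xmon, xmon]
              exact Finset.prod_union_inter
            rw [← he]
            exact Ideal.mul_mem_right _ _ (Ideal.subset_span ⟨τ ∪ σ, hτσ, rfl⟩)
          have h2 : Ideal.Quotient.mk (srIdeal k Δ) (xmon k τ) ∈ Jσ k Δ σ := by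
            refine Submodule.mem_colon_span_singleton.2 ?_
            rw [smul_eq_mul, xcls, ← map_mul, Submodule.mem_bot]
            exact Ideal.Quotient.eq_zero_iff_mem.2 h1
          rw [← hU, ← Ideal.map_span] at h2
          obtain ⟨p, hp, hpq⟩ :=
            (Ideal.mem_map_iff_of_surjective _ Ideal.Quotient.mk_surjective).1 h2
          have hq : xmon k τ - p ∈ srIdeal k Δ := Ideal.Quotient.eq.1 hpq.symm
          have hsplit : rename (Fin.castSucc : Fin m → Fin (m+1)) (xmon k τ) =
              rename (Fin.castSucc : Fin m → Fin (m+1)) p +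
              rename (Fin.castSucc : Fin m → Fin (m+1)) (xmon k τ - p) := by
            rw [← map_add]; congr 1; ring
          rw [hxρ, hsplit, mul_add]
          refine Ideal.add_mem _ ?_ ?_
          · exact hCle (mul_X_rename_mem_span_image U hp)
          · refine hAle ?_
            have h9 := Ideal.mem_map_of_mem
              (rename (Fin.castSucc : Fin m → Fin (m+1))).toRingHom hq
            rw [hrn] at h9
            exact Ideal.mul_mem_left _ _ h9
    · -- case last ∉ ρ'
      set τ := ρ'.preimage Fin.castSucc (Fin.castSucc_injective m).injOn with hτdef
      have himg : τ.image Fin.castSucc = ρ' := by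
        rw [hτdef, Finset.image_preimage]
        apply Finset.filter_true_of_mem
        intro x hx
        obtain ⟨y, hy⟩ := Fin.eq_castSucc_of_ne_last (fun h => hL (h ▸ hx))
        exact ⟨y, hy⟩
      have hcond : τ ∉ Δ ∨ σ ⊆ τ := by
        by_contra hc
        push_neg at hc
        exact hρ' (himg ▸ mem_stellar_image.2 ⟨hc.1, hc.2⟩)
      rcases hcond with hτ | hστ
      · have : xmon k ρ' = rename (Fin.castSucc : Fin m → Fin (m+1)) (xmon k τ) := by
          rw [rename_xmon, himg]
        rw [this, ← hrn]
        exact hAle (Ideal.mem_map_of_mem _ (Ideal.subset_span ⟨τ, hτ, rfl⟩))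
      · have : xmon k ρ' =
            rename (Fin.castSucc : Fin m → Fin (m+1)) (xmon k (τ \ σ)) *
            rename (Fin.castSucc : Fin m → Fin (m+1)) (xmon k σ) := by
          rw [← map_mul, ← xmon_sdiff hστ, rename_xmon, himg]
        rw [this]
        exact hBle (Ideal.mem_span_singleton'.2
          ⟨rename (Fin.castSucc : Fin m → Fin (m+1)) (xmon k (τ \ σ)), by ring⟩)
  · -- big ideal ≤ srIdeal (stellar)
    refine sup_le (sup_le ?_ ?_) ?_
    · -- mapped srIdeal
      rw [srIdeal, Ideal.map_span, Ideal.span_le]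
      rintro _ ⟨_, ⟨ρ, hρ, rfl⟩, rfl⟩
      simp only [Set.mem_setOf_eq] at hρ
      rw [hrn, rename_xmon]
      refine Ideal.subset_span ⟨ρ.image Fin.castSucc, ?_, rfl⟩
      exact fun h => hρ (mem_stellar_image.1 h).1
    · -- x_σ
      rw [Ideal.span_le, Set.singleton_subset_iff]
      rw [SetLike.mem_coe, rename_xmon]
      refine Ideal.subset_span ⟨σ.image Fin.castSucc, ?_, rfl⟩
      exact fun h => (mem_stellar_image.1 h).2 (subset_refl σ)
    · -- the u's
      rw [Ideal.span_le]
      rintro _ ⟨u, hu, rfl⟩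
      obtain ⟨s, rfl⟩ := hUmon u hu
      have hJ : Ideal.Quotient.mk (srIdeal k Δ) (monomial s 1) ∈ Jσ k Δ σ := by
        rw [← hU]
        exact Ideal.subset_span (Set.mem_image_of_mem _ hu)
      have hmul : (monomial s 1 : MvPolynomial (Fin m) k) * xmon k σ ∈ srIdeal k Δ := by
        have := Submodule.mem_colon_span_singleton.1 hJ
        rw [smul_eq_mul, xcls, ← map_mul, Submodule.mem_bot] at this
        exact Ideal.Quotient.eq_zero_iff_mem.1 this
      rw [xmon_eq, monomial_mul, one_mul] at hmul
      have hsupp : (s + ind σ).support ∉ Δ := support_not_mem_of_monomial_mem hΔ hmul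
      rw [support_add_nat, ind_support] at hsupp
      have heq : X (Fin.last m) *
          rename (Fin.castSucc : Fin m → Fin (m+1)) (monomial s 1) =
          monomial (Finsupp.single (Fin.last m) 1 + s.mapDomain Fin.castSucc) (1 : k) := by
        rw [rename_monomial, monomial_single_add, pow_one]
      rw [SetLike.mem_coe]
      show X (Fin.last m) * rename (Fin.castSucc : Fin m → Fin (m+1)) (monomial s (1:k)) ∈ _
      rw [heq]
      apply monomial_mem_srIdeal
      have hsup2 : (Finsupp.single (Fin.last m) 1 + s.mapDomain Fin.castSucc).support
          = insert (Fin.last m) (s.support.image Fin.castSucc) := by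
        rw [Finsupp.support_add_eq, Finsupp.support_single_ne_zero _ one_ne_zero,
          Finsupp.mapDomain_support_of_injective (Fin.castSucc_injective m),
          ← Finset.insert_eq]
        rw [Finsupp.support_single_ne_zero _ one_ne_zero,
          Finsupp.mapDomain_support_of_injective (Fin.castSucc_injective m)]
        simp only [Finset.disjoint_singleton_left, Finset.mem_image, Finsupp.mem_support_iff,
          not_exists, not_and]
        exact fun x _ => (Fin.castSucc_lt_last x).ne
      rw [hsup2]
      intro hmem
      exact hsupp (mem_stellar_insert.1 hmem).2.2
end

section
/- For the ring S = k[x₁,x₂,x₃,x₄,z]/(x₄z − x₁x₂, x₄x₃) over a field k and any a ∈ k with a ≠ 0, the quotient S/(z − a) is isomorphic as a k-algebra to k[x₁,x₂,x₃]/(x₁x₂x₃). -/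
set_option synthInstance.maxHeartbeats 1000000
set_option maxHeartbeats 1000000

open MvPolynomial

/-- The Kustin–Miller unprojection ideal `(x₄z − x₁x₂, x₄x₃)` in `k[x₁,…,x₄,z]`
(variables `x₁,x₂,x₃,x₄,z` modeled as indices `0,1,2,3,4` of `Fin 5`). -/
noncomputable def kmIdealEx (k : Type*) [Field k] : Ideal (MvPolynomial (Fin 5) k) :=
  Ideal.span {X 3 * X 4 - X 0 * X 1, X 3 * X 2}

/-- for `S = k[x₁,…,x₄,z]/(x₄z − x₁x₂, x₄x₃)` and `a ∈ k`, `a ≠ 0`,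
one has `S/(z − a) ≅ k[x₁,x₂,x₃]/(x₁x₂x₃)` as `k`-algebras. -/
theorem km_fiber_iso_triangle (k : Type*) [Field k] (a : k) (ha : a ≠ 0) :
    Nonempty (((MvPolynomial (Fin 5) k ⧸ kmIdealEx k) ⧸
        Ideal.span {Ideal.Quotient.mk (kmIdealEx k) (X 4 - MvPolynomial.C a)}) ≃ₐ[k]
      (MvPolynomial (Fin 3) k ⧸ (Ideal.span {X 0 * X 1 * X 2} : Ideal (MvPolynomial (Fin 3) k)))) := by
  set I : Ideal (MvPolynomial (Fin 5) k) := kmIdealEx k with hI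
  set J2 : Ideal (MvPolynomial (Fin 5) k) := Ideal.span {X 4 - C a} with hJ2
  set J : Ideal (MvPolynomial (Fin 5) k) := I ⊔ J2 with hJ
  set K : Ideal (MvPolynomial (Fin 3) k) := Ideal.span {X 0 * X 1 * X 2} with hK
  have hCa : (C a⁻¹ : MvPolynomial (Fin 5) k) * C a = 1 := by
    rw [← C_mul, inv_mul_cancel₀ ha, C_1]
  have hCa3 : (C a⁻¹ : MvPolynomial (Fin 3) k) * C a = 1 := by
    rw [← C_mul, inv_mul_cancel₀ ha, C_1]
  have hg1 : (X 3 * X 4 - X 0 * X 1 : MvPolynomial (Fin 5) k) ∈ J :=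
    Ideal.mem_sup_left (Ideal.subset_span (by simp))
  have hg2 : (X 3 * X 2 : MvPolynomial (Fin 5) k) ∈ J :=
    Ideal.mem_sup_left (Ideal.subset_span (by simp))
  have hg3 : (X 4 - C a : MvPolynomial (Fin 5) k) ∈ J :=
    Ideal.mem_sup_right (Ideal.subset_span (by simp))
  have hK0 : (X 0 * X 1 * X 2 : MvPolynomial (Fin 3) k) ∈ K := Ideal.subset_span (by simp)
  -- the forward map
  let f : Fin 5 → MvPolynomial (Fin 3) k := ![X 0, X 1, X 2, C a⁻¹ * X 0 * X 1, C a]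
  have hf0 : f 0 = X 0 := rfl
  have hf1 : f 1 = X 1 := rfl
  have hf2 : f 2 = X 2 := rfl
  have hf3 : f 3 = C a⁻¹ * X 0 * X 1 := rfl
  have hf4 : f 4 = C a := rfl
  let F : MvPolynomial (Fin 5) k →ₐ[k] MvPolynomial (Fin 3) k ⧸ K :=
    (Ideal.Quotient.mkₐ k K).comp (aeval f)
  have hFmk : ∀ p, F p = Ideal.Quotient.mk K (aeval f p) := fun p => rfl
  have hA1 : aeval f (X 3 * X 4 - X 0 * X 1 : MvPolynomial (Fin 5) k) = 0 := by
    simp only [map_sub, map_mul, aeval_X, hf0, hf1, hf3, hf4]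
    linear_combination (X 0 * X 1 : MvPolynomial (Fin 3) k) * hCa3
  have hA2 : aeval f (X 3 * X 2 : MvPolynomial (Fin 5) k) = C a⁻¹ * (X 0 * X 1 * X 2) := by
    simp only [map_mul, aeval_X, hf2, hf3]; ring
  have hA3 : aeval f (X 4 - C a : MvPolynomial (Fin 5) k) = 0 := by
    simp only [map_sub, aeval_X, aeval_C, hf4, algebraMap_eq, sub_self]
  have hFJ : ∀ x ∈ J, F x = 0 := by
    have hle : J ≤ RingHom.ker F.toRingHom := by
      rw [hJ, sup_le_iff, hI, kmIdealEx, hJ2]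
      constructor <;> rw [Ideal.span_le] <;> intro y hy <;>
        simp only [Set.mem_insert_iff, Set.mem_singleton_iff] at hy <;>
        simp only [SetLike.mem_coe, RingHom.mem_ker, AlgHom.toRingHom_eq_coe, RingHom.coe_coe]
      · rcases hy with rfl | rfl
        · rw [hFmk, hA1, map_zero]
        · rw [hFmk, hA2]
          rw [Ideal.Quotient.eq_zero_iff_mem]
          exact K.mul_mem_left _ hK0
      · subst hy; rw [hFmk, hA3, map_zero]
    exact fun x hx => hle hx
  let Fbar : (MvPolynomial (Fin 5) k ⧸ J) →ₐ[k] MvPolynomial (Fin 3) k ⧸ K :=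
    Ideal.Quotient.liftₐ J F hFJ
  have hFbar : ∀ p, Fbar (Ideal.Quotient.mk J p) = Ideal.Quotient.mk K (aeval f p) := fun p => by
    exact (Ideal.Quotient.liftₐ_apply J F hFJ _).trans (hFmk p)
  -- the backward map
  let g : Fin 3 → (MvPolynomial (Fin 5) k ⧸ J) :=
    ![Ideal.Quotient.mk J (X 0), Ideal.Quotient.mk J (X 1), Ideal.Quotient.mk J (X 2)]
  let G : MvPolynomial (Fin 3) k →ₐ[k] MvPolynomial (Fin 5) k ⧸ J := aeval g
  have hG012 : G (X 0 * X 1 * X 2) = Ideal.Quotient.mk J (X 0 * X 1 * X 2) := by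
    show aeval g (X 0 * X 1 * X 2) = _
    rw [map_mul, map_mul, aeval_X, aeval_X, aeval_X]
    show Ideal.Quotient.mk J (X 0) * Ideal.Quotient.mk J (X 1) * Ideal.Quotient.mk J (X 2) = _
    rw [← map_mul, ← map_mul]
  have hGK : ∀ x ∈ K, G x = 0 := by
    have hle : K ≤ RingHom.ker G.toRingHom := by
      rw [hK, Ideal.span_le]
      intro y hy
      simp only [Set.mem_singleton_iff] at hy; subst hy
      simp only [SetLike.mem_coe, RingHom.mem_ker, AlgHom.toRingHom_eq_coe, RingHom.coe_coe]
      rw [hG012, Ideal.Quotient.eq_zero_iff_mem]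
      have heq : (X 0 * X 1 * X 2 : MvPolynomial (Fin 5) k)
          = -(X 2) * (X 3 * X 4 - X 0 * X 1) + X 4 * (X 3 * X 2) := by ring
      rw [heq]
      exact J.add_mem (J.mul_mem_left _ hg1) (J.mul_mem_left _ hg2)
    exact fun x hx => hle hx
  let Gbar : (MvPolynomial (Fin 3) k ⧸ K) →ₐ[k] MvPolynomial (Fin 5) k ⧸ J :=
    Ideal.Quotient.liftₐ K G hGK
  have hGbar : ∀ p, Gbar (Ideal.Quotient.mk K p) = aeval g p := fun p => by
    exact Ideal.Quotient.liftₐ_apply K G hGK _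
  have hg0 : g 0 = Ideal.Quotient.mk J (X 0) := rfl
  have hg1' : g 1 = Ideal.Quotient.mk J (X 1) := rfl
  have hg2' : g 2 = Ideal.Quotient.mk J (X 2) := rfl
  have hFG : Fbar.comp Gbar = AlgHom.id k _ := by
    apply Ideal.Quotient.algHom_ext
    apply MvPolynomial.algHom_ext
    intro i
    fin_cases i
    · show Fbar (Gbar (Ideal.Quotient.mk K (X 0))) = Ideal.Quotient.mk K (X 0)
      rw [hGbar, aeval_X, hg0, hFbar, aeval_X, hf0]
    · show Fbar (Gbar (Ideal.Quotient.mk K (X 1))) = Ideal.Quotient.mk K (X 1)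
      rw [hGbar, aeval_X, hg1', hFbar, aeval_X, hf1]
    · show Fbar (Gbar (Ideal.Quotient.mk K (X 2))) = Ideal.Quotient.mk K (X 2)
      rw [hGbar, aeval_X, hg2', hFbar, aeval_X, hf2]
  have hGF : Gbar.comp Fbar = AlgHom.id k _ := by
    apply Ideal.Quotient.algHom_ext
    apply MvPolynomial.algHom_ext
    intro i
    fin_cases i
    · show Gbar (Fbar (Ideal.Quotient.mk J (X 0))) = Ideal.Quotient.mk J (X 0)
      rw [hFbar, aeval_X, hf0, hGbar, aeval_X, hg0]
    · show Gbar (Fbar (Ideal.Quotient.mk J (X 1))) = Ideal.Quotient.mk J (X 1)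
      rw [hFbar, aeval_X, hf1, hGbar, aeval_X, hg1']
    · show Gbar (Fbar (Ideal.Quotient.mk J (X 2))) = Ideal.Quotient.mk J (X 2)
      rw [hFbar, aeval_X, hf2, hGbar, aeval_X, hg2']
    · show Gbar (Fbar (Ideal.Quotient.mk J (X 3))) = Ideal.Quotient.mk J (X 3)
      rw [hFbar, aeval_X, hf3, hGbar, map_mul, map_mul, aeval_X, aeval_X, aeval_C, hg0, hg1']
      show (algebraMap k _ a⁻¹) * Ideal.Quotient.mk J (X 0) * Ideal.Quotient.mk J (X 1)
          = Ideal.Quotient.mk J (X 3)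
      have halg : (algebraMap k (MvPolynomial (Fin 5) k ⧸ J) a⁻¹)
          = Ideal.Quotient.mk J (C a⁻¹) := rfl
      rw [halg, ← map_mul, ← map_mul, Ideal.Quotient.eq]
      have heq : (C a⁻¹ * X 0 * X 1 - X 3 : MvPolynomial (Fin 5) k)
          = -(C a⁻¹) * (X 3 * X 4 - X 0 * X 1) + (C a⁻¹ * X 3) * (X 4 - C a)
            + (C a⁻¹ * C a - 1) * X 3 := by ring
      rw [heq, hCa, sub_self, zero_mul, add_zero]
      exact J.add_mem (J.mul_mem_left _ hg1) (J.mul_mem_left _ hg3)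
    · show Gbar (Fbar (Ideal.Quotient.mk J (X 4))) = Ideal.Quotient.mk J (X 4)
      rw [hFbar, aeval_X, hf4, hGbar, aeval_C]
      show (algebraMap k _ a) = Ideal.Quotient.mk J (X 4)
      have halg : (algebraMap k (MvPolynomial (Fin 5) k ⧸ J) a)
          = Ideal.Quotient.mk J (C a) := rfl
      rw [halg, Ideal.Quotient.eq]
      have heq : (C a - X 4 : MvPolynomial (Fin 5) k) = -(X 4 - C a) := by ring
      rw [heq]
      exact J.neg_mem hg3
  -- assemble
  have hmap : Ideal.span {Ideal.Quotient.mk I (X 4 - C a)}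
      = J2.map (Ideal.Quotient.mkₐ k I) := by
    rw [hJ2, Ideal.map_span, Set.image_singleton, Ideal.Quotient.mkₐ_eq_mk]
  rw [hI] at hmap
  rw [hmap]
  exact ⟨(DoubleQuot.quotQuotEquivQuotSupₐ k I J2).trans
      (AlgEquiv.ofAlgHom Fbar Gbar hFG hGF)⟩
end

section
/- Let Δ be a pure simplicial complex, σ ∈ Δ a face of dimension d−1 ≥ 1, and Δ_σ the stellar subdivision of Δ on σ. Then the h-polynomials satisfy h(Δ_σ, t) = h(Δ, t) + (t + t² + ... + t^{d−1})·h(lk_Δ(σ), t). -/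
set_option synthInstance.maxHeartbeats 1000000
set_option maxHeartbeats 1000000

open MvPolynomial
/-- The number of faces of `Γ` of cardinality `c`, with the convention that the
empty face is always counted (`f_{−1} = 1`). -/
noncomputable def fcard {m : ℕ} (Γ : Set (Finset (Fin m))) (c : ℕ) : ℕ :=
  if c = 0 then 1 else {σ : Finset (Fin m) | σ ∈ Γ ∧ σ.card = c}.ncard

/-- The `h`-polynomial `h(Γ,t) = Σ_{i=0}^{n} f_{i−1}(Γ) tⁱ (1−t)^{n−i}` of an
`(n−1)`-dimensional complex `Γ` (so `n = topCard Γ`), as a polynomial over `ℤ`. -/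
noncomputable def hPoly {m : ℕ} (Γ : Set (Finset (Fin m))) : Polynomial ℤ :=
  ∑ i ∈ Finset.range (topCard Γ + 1),
    (fcard Γ i : ℤ) • (Polynomial.X ^ i * (1 - Polynomial.X) ^ (topCard Γ - i))




namespace HPolyAux

open Polynomial

/-- transform `T g N = ∑_{i=0}^N g i X^i (1-X)^{N-i}` -/
noncomputable def Tt (g : ℕ → ℤ) (N : ℕ) : Polynomial ℤ :=
  ∑ i ∈ Finset.range (N + 1),
    g i • ((Polynomial.X : Polynomial ℤ) ^ i * (1 - Polynomial.X) ^ (N - i))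

/-- shifted sequence -/
def shf (k : ℕ) (g : ℕ → ℤ) : ℕ → ℤ := fun i => if i < k then 0 else g (i - k)

lemma Tt_succ (g : ℕ → ℤ) (N : ℕ) (h : g (N + 1) = 0) :
    Tt g (N + 1) = (1 - Polynomial.X) * Tt g N := by
  rw [Tt, Finset.sum_range_succ, h, zero_smul, add_zero, Tt, Finset.mul_sum]
  refine Finset.sum_congr rfl fun i hi => ?_
  rw [Finset.mem_range] at hi
  have h2 : N + 1 - i = (N - i) + 1 := by omega
  rw [h2]
  simp only [zsmul_eq_mul]
  ring

lemma Tt_pow (g : ℕ → ℤ) (N k : ℕ) (h : ∀ j, N < j → g j = 0) :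
    Tt g (N + k) = (1 - Polynomial.X) ^ k * Tt g N := by
  induction k with
  | zero => simp
  | succ k ih =>
      have : N + (k + 1) = (N + k) + 1 := rfl
      rw [this, Tt_succ g (N + k) (h _ (by omega)), ih, pow_succ]
      ring

lemma shf_succ (k : ℕ) (g : ℕ → ℤ) : shf (k + 1) g = shf 1 (shf k g) := by
  funext i
  simp only [shf]
  rcases i with _ | i
  · simp
  · simp only [Nat.succ_sub_one]
    by_cases h : i < k
    · rw [if_pos (by omega), if_neg (by omega), if_pos h]
    · rw [if_neg (by omega), if_neg (by omega), if_neg h]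
      congr 1
      omega

lemma Tt_shf_one (g : ℕ → ℤ) (N : ℕ) :
    Tt (shf 1 g) (N + 1) = Polynomial.X * Tt g N := by
  rw [Tt, Finset.sum_range_succ']
  have h0 : shf 1 g 0 = 0 := rfl
  rw [h0, zero_smul, add_zero, Tt, Finset.mul_sum]
  refine Finset.sum_congr rfl fun i hi => ?_
  have h1 : shf 1 g (i + 1) = g i := by simp [shf]
  have h2 : N + 1 - (i + 1) = N - i := by omega
  rw [h1, h2]
  simp only [zsmul_eq_mul]
  ring

lemma Tt_shf (k : ℕ) (g : ℕ → ℤ) (M : ℕ) :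
    Tt (shf k g) (M + k) = Polynomial.X ^ k * Tt g M := by
  induction k with
  | zero =>
      have : shf 0 g = g := by funext i; simp [shf]
      simp [this]
  | succ k ih =>
      have h1 : M + (k + 1) = (M + k) + 1 := rfl
      rw [h1, shf_succ, Tt_shf_one, ih, pow_succ]
      ring

lemma Tt_add (g h : ℕ → ℤ) (N : ℕ) :
    Tt (fun i => g i + h i) N = Tt g N + Tt h N := by
  simp [Tt, add_smul, Finset.sum_add_distrib]

lemma Tt_sub (g h : ℕ → ℤ) (N : ℕ) :
    Tt (fun i => g i - h i) N = Tt g N - Tt h N := by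
  simp [Tt, sub_smul, Finset.sum_sub_distrib]

lemma Tt_sum {κ : Type*} (s : Finset κ) (g : κ → ℕ → ℤ) (N : ℕ) :
    Tt (fun i => ∑ k ∈ s, g k i) N = ∑ k ∈ s, Tt (g k) N := by
  simp only [Tt, Finset.sum_smul]
  exact Finset.sum_comm

lemma Tt_const_mul (c : ℤ) (g : ℕ → ℤ) (N : ℕ) :
    Tt (fun i => c * g i) N = c • Tt g N := by
  simp [Tt, mul_smul, Finset.smul_sum]

/-- the binomial identity `∑_{k<d} C(d,k) X^{k+1} (1-X)^{d-k} = X - X^{d+1}` -/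
lemma binom_id (d : ℕ) :
    ∑ k ∈ Finset.range d, (d.choose k : ℤ) •
        ((Polynomial.X : Polynomial ℤ) ^ (k + 1) * (1 - Polynomial.X) ^ (d - k)) =
      Polynomial.X - Polynomial.X ^ (d + 1) := by
  have h := add_pow (Polynomial.X : Polynomial ℤ) (1 - Polynomial.X) d
  rw [add_sub_cancel, one_pow, Finset.sum_range_succ] at h
  have h2 : ∑ k ∈ Finset.range d,
      (Polynomial.X : Polynomial ℤ) ^ k * (1 - Polynomial.X) ^ (d - k) * (d.choose k : Polynomial ℤ)
      = 1 - Polynomial.X ^ d := by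
    rw [eq_sub_iff_add_eq]
    simpa using h.symm
  calc ∑ k ∈ Finset.range d, (d.choose k : ℤ) •
        ((Polynomial.X : Polynomial ℤ) ^ (k + 1) * (1 - Polynomial.X) ^ (d - k))
      = Polynomial.X * ∑ k ∈ Finset.range d,
        (Polynomial.X : Polynomial ℤ) ^ k * (1 - Polynomial.X) ^ (d - k) *
          (d.choose k : Polynomial ℤ) := by
        rw [Finset.mul_sum]
        refine Finset.sum_congr rfl fun k hk => ?_
        simp only [zsmul_eq_mul, Int.cast_natCast]
        push_cast
        ring
    _ = Polynomial.X * (1 - Polynomial.X ^ d) := by rw [h2]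
    _ = Polynomial.X - Polynomial.X ^ (d + 1) := by ring

/-- geometric identity: `(∑_{i=1}^{d-1} X^i)(1-X) = X - X^d` for `d ≥ 1`. -/
lemma geom_id (d : ℕ) (hd : 1 ≤ d) :
    (∑ i ∈ Finset.Icc 1 (d - 1), (Polynomial.X : Polynomial ℤ) ^ i) * (1 - Polynomial.X) =
      Polynomial.X - Polynomial.X ^ d := by
  have h1 : Finset.range d = insert 0 (Finset.Icc 1 (d - 1)) := by
    ext i
    simp only [Finset.mem_range, Finset.mem_insert, Finset.mem_Icc]
    omega
  have h2 : (∑ i ∈ Finset.range d, (Polynomial.X : Polynomial ℤ) ^ i)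
      = 1 + ∑ i ∈ Finset.Icc 1 (d - 1), (Polynomial.X : Polynomial ℤ) ^ i := by
    rw [h1, Finset.sum_insert (by simp)]
    simp
  have h3 := geom_sum_mul (Polynomial.X : Polynomial ℤ) d
  rw [h2] at h3
  have : (1 + ∑ i ∈ Finset.Icc 1 (d - 1), (Polynomial.X : Polynomial ℤ) ^ i) * (1 - Polynomial.X)
      = -(Polynomial.X ^ d - 1) := by rw [← h3]; ring
  have h4 : (∑ i ∈ Finset.Icc 1 (d - 1), (Polynomial.X : Polynomial ℤ) ^ i) * (1 - Polynomial.X)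
      = -(Polynomial.X ^ d - 1) - (1 - Polynomial.X) := by
    rw [← this]; ring
  rw [h4]; ring

end HPolyAux
namespace HPolyAux

/-- faces of cardinality `c` as a Finset -/
noncomputable def faceFin {m : ℕ} (Γ : Set (Finset (Fin m))) (c : ℕ) :
    Finset (Finset (Fin m)) := by
  classical exact Finset.univ.filter (fun τ => τ ∈ Γ ∧ τ.card = c)

lemma mem_faceFin {m : ℕ} {Γ : Set (Finset (Fin m))} {c : ℕ} {τ : Finset (Fin m)} :
    τ ∈ faceFin Γ c ↔ τ ∈ Γ ∧ τ.card = c := by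
  simp [faceFin]

lemma fcard_eq_card {m : ℕ} {Γ : Set (Finset (Fin m))} (hemp : ∅ ∈ Γ) (c : ℕ) :
    fcard Γ c = (faceFin Γ c).card := by
  rcases c with _ | c
  · have : faceFin Γ 0 = {∅} := by
      ext τ
      simp only [mem_faceFin, Finset.card_eq_zero, Finset.mem_singleton]
      constructor
      · rintro ⟨-, h⟩; exact h
      · rintro rfl; exact ⟨hemp, rfl⟩
    simp [fcard, this]
  · have hset : {σ : Finset (Fin m) | σ ∈ Γ ∧ σ.card = c + 1} = ↑(faceFin Γ (c + 1)) := by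
      ext τ
      simp [mem_faceFin]
    rw [fcard, if_neg (by omega), hset, Set.ncard_coe_finset]

lemma fcard_eq_zero {m : ℕ} {Γ : Set (Finset (Fin m))} {N : ℕ}
    (h : ∀ τ ∈ Γ, τ.card ≤ N) {c : ℕ} (hc : N < c) : fcard Γ c = 0 := by
  have he : {σ : Finset (Fin m) | σ ∈ Γ ∧ σ.card = c} = ∅ := by
    ext τ
    simp only [Set.mem_setOf_eq, Set.mem_empty_iff_false, iff_false, not_and]
    intro hτ hcard
    exact absurd (h τ hτ) (by omega)
  rw [fcard, if_neg (by omega), he, Set.ncard_empty]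

/-- faces of `Δ` of card `c` not containing `σ` -/
noncomputable def ffA1 {m : ℕ} (Δ : Set (Finset (Fin m))) (σ : Finset (Fin m)) (c : ℕ) :
    Finset (Finset (Fin m)) := by
  classical exact Finset.univ.filter (fun τ => τ ∈ Δ ∧ ¬ σ ⊆ τ ∧ τ.card = c)

lemma mem_ffA1 {m : ℕ} {Δ : Set (Finset (Fin m))} {σ τ : Finset (Fin m)} {c : ℕ} :
    τ ∈ ffA1 Δ σ c ↔ τ ∈ Δ ∧ ¬ σ ⊆ τ ∧ τ.card = c := by simp [ffA1]

/-- bases for new faces of the stellar subdivision -/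
noncomputable def ffA2 {m : ℕ} (Δ : Set (Finset (Fin m))) (σ : Finset (Fin m)) (c : ℕ) :
    Finset (Finset (Fin m)) := by
  classical exact Finset.univ.filter (fun τ => τ ∈ Δ ∧ ¬ σ ⊆ τ ∧ τ ∪ σ ∈ Δ ∧ τ.card = c)

lemma mem_ffA2 {m : ℕ} {Δ : Set (Finset (Fin m))} {σ τ : Finset (Fin m)} {c : ℕ} :
    τ ∈ ffA2 Δ σ c ↔ τ ∈ Δ ∧ ¬ σ ⊆ τ ∧ τ ∪ σ ∈ Δ ∧ τ.card = c := by simp [ffA2]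

/-- link faces of card `c - k` -/
noncomputable def ffB {m : ℕ} (Δ : Set (Finset (Fin m))) (σ : Finset (Fin m)) (k c : ℕ) :
    Finset (Finset (Fin m)) := by
  classical exact Finset.univ.filter (fun τ => τ ∈ link Δ σ ∧ τ.card + k = c)

lemma mem_ffB {m : ℕ} {Δ : Set (Finset (Fin m))} {σ τ : Finset (Fin m)} {k c : ℕ} :
    τ ∈ ffB Δ σ k c ↔ τ ∈ link Δ σ ∧ τ.card + k = c := by simp [ffB]

lemma ffB_card {m : ℕ} {Δ : Set (Finset (Fin m))} {σ : Finset (Fin m)} (hemp : ∅ ∈ link Δ σ)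
    (k c : ℕ) : ((ffB Δ σ k c).card : ℤ) = shf k (fun j => (fcard (link Δ σ) j : ℤ)) c := by
  by_cases h : c < k
  · have : ffB Δ σ k c = ∅ := by
      ext τ
      simp only [mem_ffB, Finset.notMem_empty, iff_false, not_and]
      intro _
      omega
    rw [this, shf, if_pos h]
    simp
  · have : ffB Δ σ k c = faceFin (link Δ σ) (c - k) := by
      ext τ
      simp only [mem_ffB, mem_faceFin]
      constructor
      · rintro ⟨h1, h2⟩; exact ⟨h1, by omega⟩
      · rintro ⟨h1, h2⟩; exact ⟨h1, by omega⟩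
    rw [this, shf, if_neg h, ← fcard_eq_card hemp]

end HPolyAux
namespace HPolyAux

lemma card_image_castSucc {m : ℕ} (τ : Finset (Fin m)) :
    (τ.image Fin.castSucc).card = τ.card :=
  Finset.card_image_of_injective _ (Fin.castSucc_injective m)

lemma last_not_mem_image {m : ℕ} (τ : Finset (Fin m)) :
    Fin.last m ∉ τ.image Fin.castSucc := by
  simp only [Finset.mem_image, not_exists, not_and]
  intro x _
  exact (Fin.castSucc_lt_last x).ne

lemma countC1 {m : ℕ} (Δ : Set (Finset (Fin m))) (σ : Finset (Fin m)) (c : ℕ) :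
    (faceFin (stellar Δ σ) (c + 1)).card = (ffA1 Δ σ (c + 1)).card + (ffA2 Δ σ c).card := by
  classical
  have inj1 : Function.Injective (Finset.image (Fin.castSucc : Fin m → Fin (m + 1))) :=
    Finset.image_injective (Fin.castSucc_injective m)
  have inj2 : Function.Injective
      (fun τ : Finset (Fin m) => insert (Fin.last m) (τ.image Fin.castSucc)) := by
    intro a b h
    have h2 := congrArg (fun s => Finset.erase s (Fin.last m)) h
    simp only [Finset.erase_insert (last_not_mem_image a),
      Finset.erase_insert (last_not_mem_image b)] at h2
    exact inj1 h2
  have key : faceFin (stellar Δ σ) (c + 1) =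
      (ffA1 Δ σ (c + 1)).image (Finset.image Fin.castSucc) ∪
      (ffA2 Δ σ c).image (fun τ => insert (Fin.last m) (τ.image Fin.castSucc)) := by
    ext τ
    simp only [mem_faceFin, Finset.mem_union, Finset.mem_image, mem_ffA1, mem_ffA2,
      stellar, Set.mem_union, Set.mem_image, Set.mem_setOf_eq]
    constructor
    · rintro ⟨⟨τ', ⟨h1, h2⟩, rfl⟩ | ⟨τ', ⟨h1, h2, h3⟩, rfl⟩, hc⟩
      · exact Or.inl ⟨τ', ⟨h1, h2, by rwa [card_image_castSucc] at hc⟩, rfl⟩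
      · refine Or.inr ⟨τ', ⟨h1, h2, h3, ?_⟩, rfl⟩
        rw [Finset.card_insert_of_notMem (last_not_mem_image τ'),
          card_image_castSucc] at hc
        omega
    · rintro (⟨τ', ⟨h1, h2, h3⟩, rfl⟩ | ⟨τ', ⟨h1, h2, h3, h4⟩, rfl⟩)
      · exact ⟨Or.inl ⟨τ', ⟨h1, h2⟩, rfl⟩, by rw [card_image_castSucc, h3]⟩
      · refine ⟨Or.inr ⟨τ', ⟨h1, h2, h3⟩, rfl⟩, ?_⟩
        rw [Finset.card_insert_of_notMem (last_not_mem_image τ'), card_image_castSucc, h4]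
  rw [key, Finset.card_union_of_disjoint, Finset.card_image_of_injective _ inj1,
    Finset.card_image_of_injective _ inj2]
  · rw [Finset.disjoint_left]
    rintro τ h1 h2
    simp only [Finset.mem_image] at h1 h2
    obtain ⟨a, -, rfl⟩ := h1
    obtain ⟨b, -, hb⟩ := h2
    have : Fin.last m ∈ a.image Fin.castSucc := by
      rw [← hb]; exact Finset.mem_insert_self _ _
    exact last_not_mem_image a this

lemma countC2 {m : ℕ} {Δ : Set (Finset (Fin m))} {σ : Finset (Fin m)} (c : ℕ) :
    (faceFin Δ c).card = (ffA1 Δ σ c).card + (ffB Δ σ σ.card c).card := by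
  classical
  have key : faceFin Δ c = ffA1 Δ σ c ∪ (ffB Δ σ σ.card c).image (· ∪ σ) := by
    ext τ
    simp only [mem_faceFin, Finset.mem_union, mem_ffA1, Finset.mem_image, mem_ffB, link,
      Set.mem_setOf_eq]
    constructor
    · rintro ⟨hτ, hc⟩
      by_cases hs : σ ⊆ τ
      · refine Or.inr ⟨τ \ σ, ⟨⟨Finset.sdiff_disjoint, ?_⟩, ?_⟩, Finset.sdiff_union_of_subset hs⟩
        · rw [Finset.sdiff_union_of_subset hs]; exact hτ
        · rw [Finset.card_sdiff_of_subset hs]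
          have := Finset.card_le_card hs
          omega
      · exact Or.inl ⟨hτ, hs, hc⟩
    · rintro (⟨h1, -, h3⟩ | ⟨τ', ⟨⟨hdisj, hu⟩, hcard⟩, rfl⟩)
      · exact ⟨h1, h3⟩
      · exact ⟨hu, by rw [Finset.card_union_of_disjoint hdisj]; exact hcard⟩
  rw [key, Finset.card_union_of_disjoint, Finset.card_image_of_injOn]
  · intro a ha b hb h
    rw [Finset.mem_coe, mem_ffB] at ha hb
    have h' : a ∪ σ = b ∪ σ := h
    have := Finset.union_sdiff_cancel_right ha.1.1
    rw [h', Finset.union_sdiff_cancel_right hb.1.1] at this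
    exact this.symm
  · rw [Finset.disjoint_left]
    rintro τ h1 h2
    rw [mem_ffA1] at h1
    simp only [Finset.mem_image, mem_ffB] at h2
    obtain ⟨τ', -, rfl⟩ := h2
    exact h1.2.1 Finset.subset_union_right

lemma countC3 {m : ℕ} {Δ : Set (Finset (Fin m))} {σ : Finset (Fin m)}
    (hΔ : IsComplex Δ) (c : ℕ) :
    (ffA2 Δ σ c).card =
      ∑ k ∈ Finset.range σ.card, σ.card.choose k * (ffB Δ σ k c).card := by
  classical
  have hmem : ∀ ρ ∈ (σ.powerset).erase σ, ∀ τ ∈ (ffB Δ σ ρ.card c).image (fun τ' => ρ ∪ τ'),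
      τ ∩ σ = ρ := by
    intro ρ hρ τ hτ
    rw [Finset.mem_erase, Finset.mem_powerset] at hρ
    simp only [Finset.mem_image, mem_ffB] at hτ
    obtain ⟨τ', ⟨⟨hdisj, -⟩, -⟩, rfl⟩ := hτ
    rw [Finset.union_inter_distrib_right, Finset.inter_eq_left.2 hρ.2,
      Finset.disjoint_iff_inter_eq_empty.1 hdisj, Finset.union_empty]
  have key : ffA2 Δ σ c =
      ((σ.powerset).erase σ).biUnion (fun ρ => (ffB Δ σ ρ.card c).image (fun τ' => ρ ∪ τ')) := by
    ext τ
    simp only [mem_ffA2, Finset.mem_biUnion, Finset.mem_erase, Finset.mem_powerset]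
    constructor
    · rintro ⟨hτΔ, hns, hu, hc⟩
      refine ⟨τ ∩ σ, ⟨fun h => hns (Finset.inter_eq_right.1 h), Finset.inter_subset_right⟩, ?_⟩
      simp only [Finset.mem_image, mem_ffB, link, Set.mem_setOf_eq]
      refine ⟨τ \ σ, ⟨⟨Finset.sdiff_disjoint, ?_⟩, ?_⟩, ?_⟩
      · rwa [Finset.sdiff_union_self_eq_union]
      · have := Finset.card_inter_add_card_sdiff τ σ
        omega
      · rw [Finset.union_comm, Finset.sdiff_union_inter]
    · rintro ⟨ρ, ⟨hne, hsub⟩, hτ⟩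
      simp only [Finset.mem_image, mem_ffB, link, Set.mem_setOf_eq] at hτ
      obtain ⟨τ', ⟨⟨hdisj, hu⟩, hcard⟩, rfl⟩ := hτ
      have hρτ' : Disjoint ρ τ' := Finset.disjoint_of_subset_left hsub hdisj.symm
      have hρabs : ρ ∪ τ' ∪ σ = τ' ∪ σ := by
        rw [Finset.union_right_comm,
          Finset.union_eq_right.2 (show ρ ⊆ σ from hsub), Finset.union_comm]
      refine ⟨?_, ?_, ?_, ?_⟩
      · refine hΔ.2 hu ?_
        intro x hx
        rcases Finset.mem_union.1 hx with h | h
        · exact Finset.mem_union.2 (Or.inr (hsub h))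
        · exact Finset.mem_union.2 (Or.inl h)
      · intro h
        apply hne
        refine Finset.Subset.antisymm hsub ?_
        intro x hx
        rcases Finset.mem_union.1 (h hx) with h' | h'
        · exact h'
        · exact absurd hx (Finset.disjoint_left.1 hdisj h')
      · rw [hρabs]; exact hu
      · rw [Finset.card_union_of_disjoint hρτ']
        omega
  have himgc : ∀ ρ ∈ (σ.powerset).erase σ,
      ((ffB Δ σ ρ.card c).image (fun τ' => ρ ∪ τ')).card = (ffB Δ σ ρ.card c).card := by
    intro ρ hρ
    rw [Finset.mem_erase, Finset.mem_powerset] at hρ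
    apply Finset.card_image_of_injOn
    intro a ha b hb h
    rw [Finset.mem_coe, mem_ffB] at ha hb
    have hda : Disjoint ρ a := Finset.disjoint_of_subset_left hρ.2 ha.1.1.symm
    have hdb : Disjoint ρ b := Finset.disjoint_of_subset_left hρ.2 hb.1.1.symm
    have h' : ρ ∪ a = ρ ∪ b := h
    have := Finset.union_sdiff_cancel_left hda
    rw [h', Finset.union_sdiff_cancel_left hdb] at this
    exact this.symm
  rw [key, Finset.card_biUnion]
  · rw [Finset.sum_congr rfl himgc]
    have e1 : ∑ ρ ∈ (σ.powerset).erase σ, (ffB Δ σ ρ.card c).card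
        + (ffB Δ σ σ.card c).card = ∑ ρ ∈ σ.powerset, (ffB Δ σ ρ.card c).card :=
      Finset.sum_erase_add _ _ (Finset.mem_powerset_self σ)
    have e2 : ∑ ρ ∈ σ.powerset, (ffB Δ σ ρ.card c).card
        = ∑ k ∈ Finset.range (σ.card + 1), σ.card.choose k * (ffB Δ σ k c).card := by
      rw [Finset.sum_powerset]
      refine Finset.sum_congr rfl fun k hk => ?_
      rw [Finset.sum_congr rfl
        (fun ρ (hρ : ρ ∈ Finset.powersetCard k σ) => by
          rw [(Finset.mem_powersetCard.1 hρ).2]),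
        Finset.sum_const, Finset.card_powersetCard, smul_eq_mul]
    have e3 : ∑ k ∈ Finset.range (σ.card + 1), σ.card.choose k * (ffB Δ σ k c).card
        = (∑ k ∈ Finset.range σ.card, σ.card.choose k * (ffB Δ σ k c).card)
          + σ.card.choose σ.card * (ffB Δ σ σ.card c).card := Finset.sum_range_succ _ _
    rw [Nat.choose_self, one_mul] at e3
    omega
  · intro x hx y hy hne
    rw [Function.onFun, Finset.disjoint_left]
    intro τ hτx hτy
    exact hne ((hmem x hx τ hτx).symm.trans (hmem y hy τ hτy))

end HPolyAux
namespace HPolyAux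

lemma shf_succ_succ (k : ℕ) (g : ℕ → ℤ) (c : ℕ) : shf (k + 1) g (c + 1) = shf k g c := by
  simp only [shf, Nat.add_lt_add_iff_right, Nat.succ_sub_succ]

lemma face_card_le {m : ℕ} {Δ : Set (Finset (Fin m))} : ∀ τ ∈ Δ, τ.card ≤ topCard Δ := by
  intro τ hτ
  exact le_csSup ((Set.toFinite Δ).image _).bddAbove ⟨τ, hτ, rfl⟩

lemma topCard_eq {m : ℕ} {Γ : Set (Finset (Fin m))} {n : ℕ}
    (hex : ∃ τ ∈ Γ, τ.card = n) (hb : ∀ τ ∈ Γ, τ.card ≤ n) : topCard Γ = n := by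
  obtain ⟨τ, hτ, hc⟩ := hex
  refine le_antisymm (csSup_le ⟨τ.card, τ, hτ, rfl⟩ ?_) ?_
  · rintro b ⟨ρ, hρ, rfl⟩; exact hb ρ hρ
  · rw [← hc]; exact le_csSup ((Set.toFinite Γ).image _).bddAbove ⟨τ, hτ, rfl⟩

lemma exists_facet_sup {m : ℕ} {Δ : Set (Finset (Fin m))} (hΔ : IsComplex Δ)
    (hpure : IsPure Δ) {σ : Finset (Fin m)} (hσ : σ ∈ Δ) :
    ∃ τ₀ ∈ Δ, σ ⊆ τ₀ ∧ τ₀.card = topCard Δ := by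
  have hne : ((fun σ : Finset (Fin m) => σ.card) '' Δ).Nonempty := ⟨σ.card, σ, hσ, rfl⟩
  obtain ⟨ρ₀, hρ₀mem, hρc⟩ := hne.csSup_mem ((Set.toFinite Δ).image _)
  have hρfacet : IsFacet Δ ρ₀ := by
    have hρc' : ρ₀.card = topCard Δ := hρc
    refine ⟨hρ₀mem, fun ρ' hρ' hsub => Finset.eq_of_subset_of_card_le hsub ?_⟩
    rw [hρc']
    exact face_card_le _ hρ'
  obtain ⟨τ₀, hτ₀, hmax⟩ := Set.Finite.exists_maximalFor (fun τ : Finset (Fin m) => τ.card)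
    {τ ∈ Δ | σ ⊆ τ} (Set.toFinite _) ⟨σ, hσ, subset_rfl⟩
  obtain ⟨hτ₀Δ, hστ₀⟩ := hτ₀
  have hτfacet : IsFacet Δ τ₀ := by
    refine ⟨hτ₀Δ, fun ρ hρ hsub => Finset.eq_of_subset_of_card_le hsub (le_of_eq ?_)⟩
    exact le_antisymm (hmax ⟨hρ, hστ₀.trans hsub⟩ (Finset.card_le_card hsub)) (Finset.card_le_card hsub)
  have hρc' : ρ₀.card = topCard Δ := hρc
  refine ⟨τ₀, hτ₀Δ, hστ₀, ?_⟩
  rw [hpure _ _ hτfacet hρfacet]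
  exact hρc'

end HPolyAux

open HPolyAux in
/-- `h`-polynomial of a stellar subdivision of a pure complex:
`h(Δ_σ, t) = h(Δ, t) + (t + t² + ⋯ + t^{d−1})·h(lk_Δ(σ), t)` where `d − 1 = dim σ`. -/
theorem hPoly_stellar {m : ℕ} (Δ : Set (Finset (Fin m)))
    (hΔ : IsComplex Δ) (hpure : IsPure Δ)
    (σ : Finset (Fin m)) (hσ : σ ∈ Δ) (hcard : 2 ≤ σ.card) :
    hPoly (stellar Δ σ) =
      hPoly Δ + (∑ i ∈ Finset.Icc 1 (σ.card - 1), (Polynomial.X : Polynomial ℤ) ^ i) *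
        hPoly (link Δ σ) := by
  classical
  set n := topCard Δ with hn
  obtain ⟨τ₀, hτ₀Δ, hστ₀, hτ₀c⟩ := exists_facet_sup hΔ hpure hσ
  have hdn : σ.card ≤ n := by
    rw [hn, ← hτ₀c]
    exact Finset.card_le_card hστ₀
  have hn2 : 2 ≤ n := le_trans hcard hdn
  have hempΔ : ∅ ∈ Δ := hΔ.2 hσ (Finset.empty_subset σ)
  have hempL : ∅ ∈ link Δ σ := ⟨Finset.disjoint_left.2 (by simp), by rwa [Finset.empty_union]⟩
  have hσnsub : ¬ σ ⊆ (∅ : Finset (Fin m)) := by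
    intro h
    have := Finset.card_le_card h
    simp only [Finset.card_empty] at this
    omega
  have hempS : ∅ ∈ stellar Δ σ := Or.inl ⟨∅, ⟨hempΔ, hσnsub⟩, by simp⟩
  -- bounds and topCard computations
  have hLle : ∀ τ ∈ link Δ σ, τ.card ≤ n - σ.card := by
    rintro τ ⟨hd, hu⟩
    have h1 := face_card_le (τ ∪ σ) hu
    rw [Finset.card_union_of_disjoint hd] at h1
    omega
  have hLtop : topCard (link Δ σ) = n - σ.card := by
    refine topCard_eq ⟨τ₀ \ σ, ⟨Finset.sdiff_disjoint, ?_⟩, ?_⟩ hLle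
    · rwa [Finset.sdiff_union_of_subset hστ₀]
    · rw [Finset.card_sdiff_of_subset hστ₀, hτ₀c]
  have hSle : ∀ τ ∈ stellar Δ σ, τ.card ≤ n := by
    rintro τ (⟨τ', ⟨h1, h2⟩, rfl⟩ | ⟨τ', ⟨h1, h2, h3⟩, rfl⟩)
    · rw [card_image_castSucc]; exact face_card_le τ' h1
    · rw [Finset.card_insert_of_notMem (last_not_mem_image τ'), card_image_castSucc]
      have hlt : τ'.card < (τ' ∪ σ).card := by
        refine Finset.card_lt_card ⟨Finset.subset_union_left, fun hsub => h2 ?_⟩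
        exact Finset.subset_union_right.trans hsub
      have := face_card_le _ h3
      omega
  have hStop : topCard (stellar Δ σ) = n := by
    refine topCard_eq ?_ hSle
    obtain ⟨x, hx⟩ := Finset.card_pos.1 (show 0 < σ.card by omega)
    refine ⟨insert (Fin.last m) ((τ₀.erase x).image Fin.castSucc),
      Or.inr ⟨τ₀.erase x, ⟨?_, ?_, ?_⟩, rfl⟩, ?_⟩
    · exact hΔ.2 hτ₀Δ (Finset.erase_subset _ _)
    · intro h; exact (Finset.notMem_erase x τ₀) (h hx)
    · have he : τ₀.erase x ∪ σ = τ₀ := by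
        apply Finset.Subset.antisymm
        · exact Finset.union_subset (Finset.erase_subset _ _) hστ₀
        · intro y hy
          by_cases hxy : y = x
          · subst hxy; exact Finset.mem_union.2 (Or.inr hx)
          · exact Finset.mem_union.2 (Or.inl (Finset.mem_erase.2 ⟨hxy, hy⟩))
      rw [he]; exact hτ₀Δ
    · rw [Finset.card_insert_of_notMem (last_not_mem_image _), card_image_castSucc,
        Finset.card_erase_of_mem (hστ₀ hx), hτ₀c]
      omega
  -- the master f-vector identity
  have master : ∀ i, (fcard (stellar Δ σ) i : ℤ) =
      (fcard Δ i : ℤ) - shf σ.card (fun j => (fcard (link Δ σ) j : ℤ)) i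
      + ∑ k ∈ Finset.range σ.card,
          (σ.card.choose k : ℤ) * shf (k + 1) (fun j => (fcard (link Δ σ) j : ℤ)) i := by
    intro i
    rcases i with _ | c
    · have h1 : shf σ.card (fun j => (fcard (link Δ σ) j : ℤ)) 0 = 0 := by
        rw [shf, if_pos (by omega)]
      have h2 : ∀ k ∈ Finset.range σ.card,
          (σ.card.choose k : ℤ) * shf (k + 1) (fun j => (fcard (link Δ σ) j : ℤ)) 0 = 0 := by
        intro k _
        rw [shf, if_pos (by omega), mul_zero]
      rw [h1, Finset.sum_congr rfl h2, Finset.sum_const, smul_zero, fcard, if_pos rfl,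
        fcard, if_pos rfl]
      ring
    · have e1 : (fcard (stellar Δ σ) (c + 1) : ℤ)
          = ((ffA1 Δ σ (c + 1)).card : ℤ) + ((ffA2 Δ σ c).card : ℤ) := by
        rw [fcard_eq_card hempS, countC1]
        push_cast
        ring
      have e2 : (fcard Δ (c + 1) : ℤ)
          = ((ffA1 Δ σ (c + 1)).card : ℤ) + ((ffB Δ σ σ.card (c + 1)).card : ℤ) := by
        rw [fcard_eq_card hempΔ, countC2]
        push_cast
        ring
      have e3 : ((ffA2 Δ σ c).card : ℤ)
          = ∑ k ∈ Finset.range σ.card, (σ.card.choose k : ℤ) * ((ffB Δ σ k c).card : ℤ) := by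
        rw [countC3 hΔ]
        push_cast
        ring
      have e4 : ((ffB Δ σ σ.card (c + 1)).card : ℤ)
          = shf σ.card (fun j => (fcard (link Δ σ) j : ℤ)) (c + 1) := ffB_card hempL _ _
      have e5 : ∑ k ∈ Finset.range σ.card,
            (σ.card.choose k : ℤ) * shf (k + 1) (fun j => (fcard (link Δ σ) j : ℤ)) (c + 1)
          = ∑ k ∈ Finset.range σ.card, (σ.card.choose k : ℤ) * ((ffB Δ σ k c).card : ℤ) := by
        refine Finset.sum_congr rfl fun k _ => ?_
        rw [shf_succ_succ, ffB_card hempL]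
      rw [e1, e2, ← e4, e5, e3]
      ring
  -- vanishing of f beyond topCard
  have hfSz : (fcard (stellar Δ σ) (n + 1) : ℤ) = 0 := by
    rw [fcard_eq_zero hSle (by omega)]; rfl
  have hfDz : (fcard Δ (n + 1) : ℤ) = 0 := by
    rw [fcard_eq_zero face_card_le (show n < n + 1 by omega)]; rfl
  have hfLz : ∀ j, n - σ.card < j → (fcard (link Δ σ) j : ℤ) = 0 := by
    intro j hj
    rw [fcard_eq_zero hLle hj]; rfl
  -- express hPolys via Tt
  have hhS : hPoly (stellar Δ σ) = Tt (fun i => (fcard (stellar Δ σ) i : ℤ)) n := by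
    rw [show hPoly (stellar Δ σ)
        = Tt (fun i => (fcard (stellar Δ σ) i : ℤ)) (topCard (stellar Δ σ)) from rfl, hStop]
  have hhD : hPoly Δ = Tt (fun i => (fcard Δ i : ℤ)) n := rfl
  have hhL : hPoly (link Δ σ) = Tt (fun i => (fcard (link Δ σ) i : ℤ)) (n - σ.card) := by
    rw [show hPoly (link Δ σ)
        = Tt (fun i => (fcard (link Δ σ) i : ℤ)) (topCard (link Δ σ)) from rfl, hLtop]
  set fL : ℕ → ℤ := fun j => (fcard (link Δ σ) j : ℤ) with hfL
  set hL0 : Polynomial ℤ := Tt fL (n - σ.card) with hhL0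
  set hD0 : Polynomial ℤ := Tt (fun i => (fcard Δ i : ℤ)) n with hhD0
  have hne10 : (1 - Polynomial.X : Polynomial ℤ) ≠ 0 := by
    intro h
    have := congrArg (fun p => Polynomial.coeff p 0) h
    simp at this
  apply mul_right_cancel₀ hne10
  -- compute the left side
  have EQ1 : hPoly (stellar Δ σ) * (1 - Polynomial.X)
      = (1 - Polynomial.X) * hD0
        - Polynomial.X ^ σ.card * ((1 - Polynomial.X) * hL0)
        + (Polynomial.X - Polynomial.X ^ (σ.card + 1)) * hL0 := by
    rw [hhS, mul_comm, ← Tt_succ _ _ hfSz]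
    have hTS : Tt (fun i => (fcard (stellar Δ σ) i : ℤ)) (n + 1)
        = Tt (fun i => (fcard Δ i : ℤ) - shf σ.card fL i
            + ∑ k ∈ Finset.range σ.card, (σ.card.choose k : ℤ) * shf (k + 1) fL i) (n + 1) := by
      congr 1
      funext i
      exact master i
    rw [hTS, Tt_add, Tt_sub]
    have hT1 : Tt (fun i => (fcard Δ i : ℤ)) (n + 1) = (1 - Polynomial.X) * hD0 :=
      Tt_succ _ _ hfDz
    have hT2 : Tt (shf σ.card fL) (n + 1)
        = Polynomial.X ^ σ.card * ((1 - Polynomial.X) * hL0) := by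
      rw [show n + 1 = (n - σ.card + 1) + σ.card by omega, Tt_shf]
      congr 1
      exact Tt_succ _ _ (hfLz _ (by omega))
    have hT3 : Tt (fun i => ∑ k ∈ Finset.range σ.card,
          (σ.card.choose k : ℤ) * shf (k + 1) fL i) (n + 1)
        = (Polynomial.X - Polynomial.X ^ (σ.card + 1)) * hL0 := by
      rw [Tt_sum]
      have hterm : ∀ k ∈ Finset.range σ.card,
          Tt (fun i => (σ.card.choose k : ℤ) * shf (k + 1) fL i) (n + 1)
          = (σ.card.choose k : ℤ) •
              (Polynomial.X ^ (k + 1) * ((1 - Polynomial.X) ^ (σ.card - k) * hL0)) := by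
        intro k hk
        rw [Finset.mem_range] at hk
        rw [Tt_const_mul]
        congr 1
        rw [show n + 1 = (n - k) + (k + 1) by omega, Tt_shf]
        congr 1
        rw [show n - k = (n - σ.card) + (σ.card - k) by omega]
        exact Tt_pow _ _ _ hfLz
      rw [Finset.sum_congr rfl hterm, ← binom_id σ.card, Finset.sum_mul]
      refine Finset.sum_congr rfl fun k _ => ?_
      rw [smul_mul_assoc]
      congr 1
      ring
    rw [hT1, hT2, hT3]
  rw [EQ1, hhD, hhL]
  have hgeom := geom_id σ.card (by omega)
  linear_combination -hL0 * hgeom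
end
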